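/- For u ∈ A_{2n}(4312), there exist no integers v_1 ≤ v_2 with v_1 ↦ (v_2 ↦ u) a 4312-avoiding alternating permutation of {1,...,2n+2} if and only if g(u) = u_1, where g(u) = min{2n+1, u_i : ∃ i < j < k with u_j < u_k < u_i}. -/

import Mathlib

/-- `u` is a permutation of `{1,...,m}`, given as the word `u 0, u 1, ..., u (m-1)`. -/
def IsPermOn (m : ℕ) (u : Fin m → ℕ) : Prop :=
  Function.Injective u ∧ ∀ i, u i ∈ Finset.Icc 1 m

/-- up-down (alternating): u 0 < u 1 > u 2 < u 3 > ... -/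
def UpDown (m : ℕ) (u : Fin m → ℕ) : Prop :=
  ∀ i : ℕ, ∀ h : i + 1 < m,
    (i % 2 = 0 → u ⟨i, by omega⟩ < u ⟨i + 1, h⟩) ∧
    (i % 2 = 1 → u ⟨i + 1, h⟩ < u ⟨i, by omega⟩)

/-- down-up: u 0 > u 1 < u 2 > u 3 < ... -/
def DownUp (m : ℕ) (u : Fin m → ℕ) : Prop :=
  ∀ i : ℕ, ∀ h : i + 1 < m,
    (i % 2 = 0 → u ⟨i + 1, h⟩ < u ⟨i, by omega⟩) ∧
    (i % 2 = 1 → u ⟨i, by omega⟩ < u ⟨i + 1, h⟩)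

/-- `u` contains the pattern `σ`. -/
def Contains {m k : ℕ} (u : Fin m → ℕ) (σ : Fin k → ℕ) : Prop :=
  ∃ g : Fin k → Fin m, StrictMono g ∧ ∀ a b : Fin k, u (g a) < u (g b) ↔ σ a < σ b

def Avoids {m k : ℕ} (u : Fin m → ℕ) (σ : Fin k → ℕ) : Prop := ¬ Contains u σ

/-- The set `A_m(σ)` of σ-avoiding up-down alternating permutations of `{1,...,m}`. -/
def AvoidSet (m : ℕ) {k : ℕ} (σ : Fin k → ℕ) : Set (Fin m → ℕ) :=
  {u | IsPermOn m u ∧ UpDown m u ∧ Avoids u σ}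

def p1234 : Fin 4 → ℕ := ![1, 2, 3, 4]
def p1243 : Fin 4 → ℕ := ![1, 2, 4, 3]
def p2143 : Fin 4 → ℕ := ![2, 1, 4, 3]
def p4312 : Fin 4 → ℕ := ![4, 3, 1, 2]
def p3412 : Fin 4 → ℕ := ![3, 4, 1, 2]

/-- `f(u)`: max over 0 and the smaller entries of 21-patterns of `u`. -/
noncomputable def fval {m : ℕ} (u : Fin m → ℕ) : ℕ :=
  sSup ({0} ∪ {x | ∃ i j : Fin m, i < j ∧ u j < u i ∧ x = u j})

/-- `e(u)`: max over 0 and the smallest entries of 132-patterns of `u`. -/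
noncomputable def eval' {m : ℕ} (u : Fin m → ℕ) : ℕ :=
  sSup ({0} ∪ {x | ∃ i j k : Fin m, i < j ∧ j < k ∧ u i < u k ∧ u k < u j ∧ x = u i})

/-- `g(u)`: min over m+1 and the largest entries of 312-patterns of `u`. -/
noncomputable def gval {m : ℕ} (u : Fin m → ℕ) : ℕ :=
  sInf ({m + 1} ∪ {x | ∃ i j k : Fin m, i < j ∧ j < k ∧ u j < u k ∧ u k < u i ∧ x = u i})

/-- `h(u)`: min over m+1 and the larger entries of 12-patterns of `u`. -/
noncomputable def hval {m : ℕ} (u : Fin m → ℕ) : ℕ :=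
  sInf ({m + 1} ∪ {x | ∃ i j : Fin m, i < j ∧ u i < u j ∧ x = u j})

/-- the operation `v ↦ u`: prepend `v`, increasing every entry `≥ v` by 1. -/
def ins {m : ℕ} (v : ℕ) (u : Fin m → ℕ) : Fin (m + 1) → ℕ :=
  Fin.cases v (fun j => if u j < v then u j else u j + 1)

/-- standardization of a word with distinct entries. -/
def stWord {k : ℕ} (r : Fin k → ℕ) : Fin k → ℕ :=
  fun j => (Finset.univ.filter (fun i => r i ≤ r j)).card

-- pointwise formulas
lemma ii_zero {m : ℕ} (v1 v2 : ℕ) (u : Fin m → ℕ) (h : 0 < m + 1 + 1) :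
    ins v1 (ins v2 u) ⟨0, h⟩ = v1 := rfl

lemma ii_one {m : ℕ} (v1 v2 : ℕ) (u : Fin m → ℕ) (h : 1 < m + 1 + 1) :
    ins v1 (ins v2 u) ⟨1, h⟩ = if v2 < v1 then v2 else v2 + 1 := rfl

lemma ii_two {m : ℕ} (v1 v2 : ℕ) (u : Fin m → ℕ) (j : ℕ) (hj : j < m) (h2 : j + 2 < m + 1 + 1) :
    ins v1 (ins v2 u) ⟨j + 2, h2⟩ =
      (if (if u ⟨j, hj⟩ < v2 then u ⟨j, hj⟩ else u ⟨j, hj⟩ + 1) < v1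
       then (if u ⟨j, hj⟩ < v2 then u ⟨j, hj⟩ else u ⟨j, hj⟩ + 1)
       else (if u ⟨j, hj⟩ < v2 then u ⟨j, hj⟩ else u ⟨j, hj⟩ + 1) + 1) := rfl

lemma contains_of_chain {m : ℕ} (w : Fin m → ℕ) (q0 q1 q2 q3 : Fin m)
    (h01 : q0 < q1) (h12 : q1 < q2) (h23 : q2 < q3)
    (hv1 : w q2 < w q3) (hv2 : w q3 < w q1) (hv3 : w q1 < w q0) :
    Contains w p4312 := by
  refine ⟨![q0, q1, q2, q3], ?_, ?_⟩
  · intro a b hab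
    rcases a with ⟨a, ha⟩; rcases b with ⟨b, hb⟩
    simp only [Fin.mk_lt_mk] at hab
    have h01' := h01; have h12' := h12; have h23' := h23
    rw [Fin.lt_def] at h01' h12' h23' ⊢
    interval_cases a <;> interval_cases b <;>
      simp_all [Matrix.cons_val_zero, Matrix.cons_val_one, Matrix.head_cons,
        Fin.mk_zero, Fin.mk_one] <;> omega
  · intro a b
    rcases a with ⟨a, ha⟩; rcases b with ⟨b, hb⟩
    interval_cases a <;> interval_cases b <;>
      simp_all [p4312, Matrix.cons_val_zero, Matrix.cons_val_one, Matrix.head_cons] <;> omega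

lemma chain_of_contains {m : ℕ} (w : Fin m → ℕ) (h : Contains w p4312) :
    ∃ q0 q1 q2 q3 : Fin m, q0 < q1 ∧ q1 < q2 ∧ q2 < q3 ∧
      w q2 < w q3 ∧ w q3 < w q1 ∧ w q1 < w q0 := by
  obtain ⟨g, hmono, hiff⟩ := h
  exact ⟨g 0, g 1, g 2, g 3, hmono (by decide), hmono (by decide), hmono (by decide),
    (hiff 2 3).2 (by decide), (hiff 3 1).2 (by decide),
    (hiff 1 0).2 (by norm_num [p4312])⟩

lemma isPermOn_ins {m : ℕ} (v : ℕ) (u : Fin m → ℕ) (hv1 : 1 ≤ v) (hv2 : v ≤ m + 1)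
    (hu : IsPermOn m u) : IsPermOn (m + 1) (ins v u) := by
  obtain ⟨hinj, hrange⟩ := hu
  constructor
  · intro a b hab
    induction a using Fin.cases with
    | zero =>
      induction b using Fin.cases with
      | zero => rfl
      | succ b =>
        exfalso
        simp only [ins, Fin.cases_zero, Fin.cases_succ] at hab
        split at hab <;> omega
    | succ a =>
      induction b using Fin.cases with
      | zero =>
        exfalso
        simp only [ins, Fin.cases_zero, Fin.cases_succ] at hab
        split at hab <;> omega
      | succ b =>
        simp only [ins, Fin.cases_succ] at hab
        have : u a = u b := by split at hab <;> split at hab <;> omega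
        exact congrArg Fin.succ (hinj this)
  · intro i
    induction i using Fin.cases with
    | zero => simp only [ins, Fin.cases_zero, Finset.mem_Icc]; omega
    | succ j =>
      have := hrange j
      simp only [Finset.mem_Icc] at this ⊢
      simp only [ins, Fin.cases_succ]
      split <;> omega

lemma gval_le_top {m : ℕ} (u : Fin m → ℕ) (i j k : Fin m) (hij : i < j) (hjk : j < k)
    (h1 : u j < u k) (h2 : u k < u i) : gval u ≤ u i :=
  Nat.sInf_le (Set.mem_union_right _ ⟨i, j, k, hij, hjk, h1, h2, rfl⟩)

lemma gval_cases {m : ℕ} (u : Fin m → ℕ) :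
    gval u = m + 1 ∨ ∃ i j k : Fin m, i < j ∧ j < k ∧ u j < u k ∧ u k < u i ∧ gval u = u i := by
  have hne : ({m + 1} ∪ {x | ∃ i j k : Fin m, i < j ∧ j < k ∧ u j < u k ∧ u k < u i ∧ x = u i} :
      Set ℕ).Nonempty := ⟨m + 1, Or.inl rfl⟩
  have := Nat.sInf_mem hne
  rcases this with h | h
  · exact Or.inl h
  · exact Or.inr h

theorem stmt13 (n : ℕ) (hn : 1 ≤ n) (u : Fin (2 * n) → ℕ) (hu : u ∈ AvoidSet (2 * n) p4312) :
    (¬ ∃ v1 v2 : ℕ, v1 ≤ v2 ∧ ins v1 (ins v2 u) ∈ AvoidSet (2 * n + 1 + 1) p4312) ↔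
      gval u = u ⟨0, by omega⟩ := by
  obtain ⟨⟨hinj, hrange⟩, hud, hav⟩ := hu
  have h0m : (0 : ℕ) < 2 * n := by omega
  set u0 : ℕ := u ⟨0, h0m⟩ with hu0def
  have hu0r := hrange ⟨0, h0m⟩
  rw [Finset.mem_Icc] at hu0r
  -- u0 ≤ gval u
  have hle_g : u0 ≤ gval u := by
    apply le_csInf ⟨2 * n + 1, Or.inl rfl⟩
    rintro b (hb | ⟨i, j, k, hij, hjk, h1, h2, rfl⟩)
    · rcases hb with rfl; omega
    · by_contra hlt
      push_neg at hlt
      have hi0 : (0 : ℕ) < i.val := by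
        rcases Nat.eq_zero_or_pos i.val with h | h
        · exfalso
          have : i = ⟨0, h0m⟩ := Fin.ext h
          rw [this] at hlt
          omega
        · exact h
      exact hav (contains_of_chain u ⟨0, h0m⟩ i j k
        (by rw [Fin.lt_def]; exact hi0) hij hjk h1 h2 (by omega))
  constructor
  · -- no extension → gval = u0
    intro hne
    by_contra hneq
    have hgt : u0 < gval u := lt_of_le_of_ne hle_g (fun h => hneq h.symm)
    apply hne
    set v : ℕ := u0 + 1 with hvdef
    refine ⟨v, v, le_refl v, ?_, ?_, ?_⟩
    · -- IsPermOn
      have h1 : IsPermOn (2 * n + 1) (ins v u) :=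
        isPermOn_ins v u (by omega) (by omega) ⟨hinj, hrange⟩
      exact isPermOn_ins v (ins v u) (by omega) (by omega) h1
    · -- UpDown
      intro i h
      match i with
      | 0 =>
        refine ⟨fun _ => ?_, fun hp => by omega⟩
        rw [ii_zero, ii_one]
        split <;> omega
      | 1 =>
        refine ⟨fun hp => by omega, fun _ => ?_⟩
        rw [ii_one, ii_two v v u 0 h0m]
        have : u ⟨0, h0m⟩ = u0 := rfl
        rw [this]
        split_ifs <;> omega
      | (j + 2) =>
        have hj1 : j + 1 < 2 * n := by omega
        have hj : j < 2 * n := by omega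
        have hudj := hud j hj1
        have e1 : (⟨j + 2 + 1, h⟩ : Fin (2 * n + 1 + 1)) = ⟨j + 1 + 2, by omega⟩ := rfl
        rw [e1, ii_two v v u j hj, ii_two v v u (j + 1) hj1]
        rcases Nat.mod_two_eq_zero_or_one j with hp | hp
        · refine ⟨fun _ => ?_, fun hc => by omega⟩
          have := hudj.1 hp
          split_ifs <;> omega
        · refine ⟨fun hc => by omega, fun _ => ?_⟩
          have := hudj.2 hp
          split_ifs <;> omega
    · -- Avoids
      intro hcont
      obtain ⟨q0, q1, q2, q3, h01, h12, h23, hv1, hv2, hv3⟩ := chain_of_contains _ hcont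
      rcases q0 with ⟨a0, b0⟩; rcases q1 with ⟨a1, b1⟩
      rcases q2 with ⟨a2, b2⟩; rcases q3 with ⟨a3, b3⟩
      rw [Fin.mk_lt_mk] at h01 h12 h23
      by_cases hc0 : 2 ≤ a0
      · -- all inside u : get 4312 in u
        have e0 : (⟨a0, b0⟩ : Fin (2 * n + 1 + 1)) = ⟨(a0 - 2) + 2, by omega⟩ := Fin.ext (show a0 = a0 - 2 + 2 by omega)
        have e1 : (⟨a1, b1⟩ : Fin (2 * n + 1 + 1)) = ⟨(a1 - 2) + 2, by omega⟩ := Fin.ext (show a1 = a1 - 2 + 2 by omega)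
        have e2 : (⟨a2, b2⟩ : Fin (2 * n + 1 + 1)) = ⟨(a2 - 2) + 2, by omega⟩ := Fin.ext (show a2 = a2 - 2 + 2 by omega)
        have e3 : (⟨a3, b3⟩ : Fin (2 * n + 1 + 1)) = ⟨(a3 - 2) + 2, by omega⟩ := Fin.ext (show a3 = a3 - 2 + 2 by omega)
        have k0 : a0 - 2 < 2 * n := by omega
        have k1 : a1 - 2 < 2 * n := by omega
        have k2 : a2 - 2 < 2 * n := by omega
        have k3 : a3 - 2 < 2 * n := by omega
        rw [e0, ii_two v v u (a0 - 2) k0] at hv3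
        rw [e1, ii_two v v u (a1 - 2) k1] at hv2 hv3
        rw [e2, ii_two v v u (a2 - 2) k2] at hv1
        rw [e3, ii_two v v u (a3 - 2) k3] at hv1 hv2
        apply hav
        apply contains_of_chain u ⟨a0 - 2, k0⟩ ⟨a1 - 2, k1⟩ ⟨a2 - 2, k2⟩ ⟨a3 - 2, k3⟩
          (by rw [Fin.mk_lt_mk]; omega) (by rw [Fin.mk_lt_mk]; omega)
          (by rw [Fin.mk_lt_mk]; omega)
        · split_ifs at hv1 <;> omega
        · split_ifs at hv2 <;> omega
        · split_ifs at hv3 <;> omega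
      · -- q0 is position 0 or 1 : find a 312 in u with top < v ≤ gval
        push_neg at hc0
        have hq0v : ins v (ins v u) ⟨a0, b0⟩ ≤ v + 1 := by
          interval_cases a0
          · rw [ii_zero]; omega
          · rw [ii_one]; split <;> omega
        by_cases hc1 : 2 ≤ a1
        · have e1 : (⟨a1, b1⟩ : Fin (2 * n + 1 + 1)) = ⟨(a1 - 2) + 2, by omega⟩ := Fin.ext (show a1 = a1 - 2 + 2 by omega)
          have e2 : (⟨a2, b2⟩ : Fin (2 * n + 1 + 1)) = ⟨(a2 - 2) + 2, by omega⟩ := Fin.ext (show a2 = a2 - 2 + 2 by omega)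
          have e3 : (⟨a3, b3⟩ : Fin (2 * n + 1 + 1)) = ⟨(a3 - 2) + 2, by omega⟩ := Fin.ext (show a3 = a3 - 2 + 2 by omega)
          have k1 : a1 - 2 < 2 * n := by omega
          have k2 : a2 - 2 < 2 * n := by omega
          have k3 : a3 - 2 < 2 * n := by omega
          rw [e1, ii_two v v u (a1 - 2) k1] at hv2 hv3
          rw [e2, ii_two v v u (a2 - 2) k2] at hv1
          rw [e3, ii_two v v u (a3 - 2) k3] at hv1 hv2
          -- top value
          have htop : u ⟨a1 - 2, k1⟩ < v := by
            split_ifs at hv3 <;> omega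
          have hgle : gval u ≤ u ⟨a1 - 2, k1⟩ := by
            apply gval_le_top u ⟨a1 - 2, k1⟩ ⟨a2 - 2, k2⟩ ⟨a3 - 2, k3⟩
              (by rw [Fin.mk_lt_mk]; omega) (by rw [Fin.mk_lt_mk]; omega)
            · split_ifs at hv1 <;> omega
            · split_ifs at hv2 <;> omega
          omega
        · -- a0 = 0, a1 = 1 : w q1 = v+1 > w q0 = v, contradiction
          push_neg at hc1
          have ha0 : a0 = 0 := by omega
          have ha1 : a1 = 1 := by omega
          subst ha0 ha1
          rw [ii_zero] at hv3
          rw [ii_one] at hv3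
          split at hv3 <;> omega
  · -- gval = u0 → no extension
    intro hg
    rintro ⟨v1, v2, hle, ⟨hpinj, hprange⟩, hud', hav'⟩
    -- from alternation: u0 < v2
    have h2lt : (2 : ℕ) < 2 * n + 1 + 1 := by omega
    have hstep := (hud' 1 h2lt).2 rfl
    rw [ii_one] at hstep
    rw [show (⟨1 + 1, h2lt⟩ : Fin (2 * n + 1 + 1)) = ⟨0 + 2, by omega⟩ from rfl,
      ii_two v1 v2 u 0 h0m] at hstep
    have hu0v2 : u0 < v2 := by
      rw [hu0def]
      split_ifs at hstep <;> omega
    -- gval attained by a 312 pattern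
    rcases gval_cases u with hcase | ⟨i, j, k, hij, hjk, h1, h2, htop⟩
    · omega
    · -- build 4312 in the extended word
      rcases i with ⟨ia, ib⟩; rcases j with ⟨ja, jb⟩; rcases k with ⟨ka, kb⟩
      rw [Fin.mk_lt_mk] at hij hjk
      have hui : u ⟨ia, ib⟩ < v2 := by rw [← htop, hg]; exact hu0v2
      apply hav'
      apply contains_of_chain (ins v1 (ins v2 u)) ⟨1, by omega⟩ ⟨ia + 2, by omega⟩
        ⟨ja + 2, by omega⟩ ⟨ka + 2, by omega⟩
        (by rw [Fin.mk_lt_mk]; omega) (by rw [Fin.mk_lt_mk]; omega)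
        (by rw [Fin.mk_lt_mk]; omega)
      · rw [ii_two v1 v2 u ja jb, ii_two v1 v2 u ka kb]
        split_ifs <;> omega
      · rw [ii_two v1 v2 u ka kb, ii_two v1 v2 u ia ib]
        split_ifs <;> omega
      · rw [ii_two v1 v2 u ia ib, ii_one]
        split_ifs <;> omega
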